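/- Assume Axioms A3 and A4 hold with uniform convergence on compact sets. Then for each x ∈ X and each u ∈ X, the infinitesimal translation L_u^x := Δ^x(u, ·) is a d^x-isometry: for all v, w ∈ X, d^x(Δ^x(u, v), Δ^x(u, w)) = d^x(v, w). -/

import Mathlib

open Filter Topology

/-- For a dilatation structure on a locally compact complete metric
space `X` (axioms A3 and A4 holding with uniform convergence on compact sets),
the infinitesimal translations `L_u^x = Δ^x(u, ·)` are `d^x`-isometries:
`d^x(Δ^x(u,v), Δ^x(u,w)) = d^x(v,w)` for all `v, w`. -/
theorem infinitesimal_translations_are_isometries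
    {X : Type*} [MetricSpace X] [CompleteSpace X] [LocallyCompactSpace X]
    (δ : ℝ → X → X → X)
    (hcomp : ∀ ε μ : ℝ, 0 < ε → 0 < μ → ∀ x y : X, δ ε x (δ μ x y) = δ (ε * μ) x y)
    (hone : ∀ x y : X, δ 1 x y = y)
    (hfix : ∀ ε : ℝ, 0 < ε → ∀ x : X, δ ε x x = x)
    (hcont : ContinuousOn (fun p : ℝ × X × X => δ p.1 p.2.1 p.2.2) {p | 0 < p.1})
    (hlim0 : ∀ x y : X, Tendsto (fun ε : ℝ => δ ε x y) (𝓝[>] (0 : ℝ)) (𝓝 x))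
    (dx : X → X → X → ℝ)
    (hA3 : ∀ K : Set (X × X × X), IsCompact K →
      TendstoUniformlyOn
        (fun (ε : ℝ) (p : X × X × X) => (1 / ε) * dist (δ ε p.1 p.2.1) (δ ε p.1 p.2.2))
        (fun p => dx p.1 p.2.1 p.2.2) (𝓝[>] (0 : ℝ)) K)
    (ΔL : X → X → X → X)
    (hA4 : ∀ K : Set (X × X × X), IsCompact K →
      TendstoUniformlyOn
        (fun (ε : ℝ) (p : X × X × X) => δ ε⁻¹ (δ ε p.1 p.2.1) (δ ε p.1 p.2.2))
        (fun p => ΔL p.1 p.2.1 p.2.2) (𝓝[>] (0 : ℝ)) K) :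
    ∀ x u v w : X, dx x (ΔL x u v) (ΔL x u w) = dx x v w := by
  intro x u v w
  obtain ⟨K, hKcomp, hKmem⟩ := exists_compact_mem_nhds ((x, ΔL x u v, ΔL x u w) : X × X × X)
  have hA3K := hA3 K hKcomp
  -- continuity of approximants on K
  have hFcont : ∀ᶠ ε in 𝓝[>] (0 : ℝ), ContinuousOn
      (fun p : X × X × X => (1 / ε) * dist (δ ε p.1 p.2.1) (δ ε p.1 p.2.2)) K := by
    filter_upwards [self_mem_nhdsWithin] with ε hε
    have hε : (0 : ℝ) < ε := hε
    have hδ : Continuous (fun q : X × X => δ ε q.1 q.2) := by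
      rw [continuous_iff_continuousAt]
      intro q
      have h1 : ContinuousAt (fun p : ℝ × X × X => δ p.1 p.2.1 p.2.2) (ε, q) :=
        hcont.continuousAt (IsOpen.mem_nhds (isOpen_lt continuous_const continuous_fst) hε)
      exact h1.comp ((continuousAt_const (y := ε)).prodMk continuousAt_id)
    exact (continuous_const.mul
      ((hδ.comp (continuous_fst.prodMk (continuous_fst.comp continuous_snd))).dist
        (hδ.comp (continuous_fst.prodMk (continuous_snd.comp continuous_snd))))).continuousOn
  have hdxcont : ContinuousOn (fun p : X × X × X => dx p.1 p.2.1 p.2.2) K :=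
    hA3K.continuousOn hFcont.frequently
  -- the curve inside K
  set g : ℝ → X × X × X := fun ε =>
    (δ ε x u, δ ε⁻¹ (δ ε x u) (δ ε x v), δ ε⁻¹ (δ ε x u) (δ ε x w)) with hg_def
  have hg1 : Tendsto (fun ε : ℝ => δ ε x u) (𝓝[>] (0 : ℝ)) (𝓝 x) := hlim0 x u
  have hg2 : Tendsto (fun ε : ℝ => δ ε⁻¹ (δ ε x u) (δ ε x v)) (𝓝[>] (0 : ℝ))
      (𝓝 (ΔL x u v)) :=
    (hA4 {(x, u, v)} isCompact_singleton).tendsto_at rfl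
  have hg3 : Tendsto (fun ε : ℝ => δ ε⁻¹ (δ ε x u) (δ ε x w)) (𝓝[>] (0 : ℝ))
      (𝓝 (ΔL x u w)) :=
    (hA4 {(x, u, w)} isCompact_singleton).tendsto_at rfl
  have hgn : Tendsto g (𝓝[>] (0 : ℝ)) (𝓝 ((x, ΔL x u v, ΔL x u w) : X × X × X)) := by
    rw [nhds_prod_eq, nhds_prod_eq]
    exact hg1.prodMk (hg2.prodMk hg3)
  have hg : Tendsto g (𝓝[>] (0 : ℝ)) (𝓝[K] ((x, ΔL x u v, ΔL x u w) : X × X × X)) := by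
    rw [tendsto_nhdsWithin_iff]
    exact ⟨hgn, hgn hKmem⟩
  -- limit of F ε (g ε) is dx x (ΔL x u v) (ΔL x u w)
  have hlim1 : Tendsto (fun ε : ℝ =>
      (1 / ε) * dist (δ ε (g ε).1 (g ε).2.1) (δ ε (g ε).1 (g ε).2.2))
      (𝓝[>] (0 : ℝ)) (𝓝 (dx x (ΔL x u v) (ΔL x u w))) :=
    hA3K.tendsto_comp (hdxcont _ (mem_of_mem_nhds hKmem)) hg
  -- that function equals the simple one
  have heq : ∀ᶠ ε in 𝓝[>] (0 : ℝ),
      (1 / ε) * dist (δ ε (g ε).1 (g ε).2.1) (δ ε (g ε).1 (g ε).2.2)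
        = (1 / ε) * dist (δ ε x v) (δ ε x w) := by
    filter_upwards [self_mem_nhdsWithin] with ε hε
    have hε : (0 : ℝ) < ε := hε
    have key : ∀ y : X, δ ε (δ ε x u) (δ ε⁻¹ (δ ε x u) (δ ε x y)) = δ ε x y := by
      intro y
      rw [hcomp ε ε⁻¹ hε (inv_pos.mpr hε), mul_inv_cancel₀ hε.ne', hone]
    simp only [hg_def, key]
  have hlim1' : Tendsto (fun ε : ℝ => (1 / ε) * dist (δ ε x v) (δ ε x w))
      (𝓝[>] (0 : ℝ)) (𝓝 (dx x (ΔL x u v) (ΔL x u w))) :=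
    hlim1.congr' heq
  have hlim2 : Tendsto (fun ε : ℝ => (1 / ε) * dist (δ ε x v) (δ ε x w))
      (𝓝[>] (0 : ℝ)) (𝓝 (dx x v w)) :=
    (hA3 {(x, v, w)} isCompact_singleton).tendsto_at rfl
  exact tendsto_nhds_unique hlim1' hlim2
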